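/- Let n ≥ 2 and let p ∈ ℤ[x] be a null-polynomial modulo n of degree r (i.e., p(x) ≡ 0 (mod n) for all x ∈ ℤ). Then every coefficient a_k of p satisfies a_k · r! ≡ 0 (mod n). -/
import Mathlib

open Polynomial

private lemma fdiff_eval (p : Polynomial ℤ) (x : ℤ) :
    (taylor (1 : ℤ) p - p).eval x = p.eval (x + 1) - p.eval x := by
  rw [eval_sub, taylor_eval]

private lemma eval_one_of_natDegree_le_one (q : Polynomial ℤ) (hq : q.natDegree ≤ 1) :
    q.eval 1 = q.coeff 0 + q.coeff 1 := by
  conv_lhs => rw [eq_X_add_C_of_natDegree_le_one hq]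
  simp [add_comm]

private lemma fdiff_natDegree_le (p : Polynomial ℤ) (m : ℕ) (hp : p.natDegree ≤ m + 1) :
    (taylor (1 : ℤ) p - p).natDegree ≤ m := by
  rw [natDegree_le_iff_coeff_eq_zero]
  intro j hj
  rw [coeff_sub, taylor_coeff]
  rcases eq_or_lt_of_le (Nat.succ_le_of_lt hj) with hj' | hj'
  · -- j = m + 1
    have hd : (hasseDeriv j p).natDegree ≤ 0 := by
      refine le_trans (natDegree_hasseDeriv_le p j) ?_
      omega
    rw [eq_C_of_natDegree_le_zero hd, eval_C, hasseDeriv_coeff, Nat.zero_add, Nat.choose_self,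
      Nat.cast_one, one_mul, sub_self]
  · -- j > m + 1
    have h1 : p.coeff j = 0 := coeff_eq_zero_of_natDegree_lt (lt_of_le_of_lt hp hj')
    have hd : (hasseDeriv j p).natDegree ≤ 0 := by
      refine le_trans (natDegree_hasseDeriv_le p j) ?_
      omega
    rw [eq_C_of_natDegree_le_zero hd, eval_C, hasseDeriv_coeff, Nat.zero_add, Nat.choose_self,
      Nat.cast_one, one_mul, h1, sub_self]

private lemma fdiff_coeff_top (p : Polynomial ℤ) (m : ℕ) (hp : p.natDegree ≤ m + 1) :
    (taylor (1 : ℤ) p - p).coeff m = (m + 1 : ℤ) * p.coeff (m + 1) := by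
  rw [coeff_sub, taylor_coeff]
  have hd : (hasseDeriv m p).natDegree ≤ 1 := by
    refine le_trans (natDegree_hasseDeriv_le p m) ?_
    omega
  rw [eval_one_of_natDegree_le_one _ hd, hasseDeriv_coeff, hasseDeriv_coeff]
  simp only [Nat.zero_add, Nat.choose_self, Nat.cast_one, one_mul]
  rw [Nat.add_comm 1 m, Nat.choose_succ_self_right]
  push_cast
  ring

/-- The leading-coefficient step via finite differences. -/
private lemma lead_dvd (n : ℕ) : ∀ m : ℕ, ∀ p : Polynomial ℤ, p.natDegree ≤ m →
    (∀ x : ℤ, (n : ℤ) ∣ p.eval x) → (n : ℤ) ∣ p.coeff m * (m.factorial : ℤ) := by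
  intro m
  induction m with
  | zero =>
    intro p _ h
    simpa [coeff_zero_eq_eval_zero] using h 0
  | succ m ih =>
    intro p hp h
    have hq : ∀ x : ℤ, (n : ℤ) ∣ (taylor (1 : ℤ) p - p).eval x := by
      intro x
      rw [fdiff_eval]
      exact dvd_sub (h (x + 1)) (h x)
    have := ih (taylor (1 : ℤ) p - p) (fdiff_natDegree_le p m hp) hq
    rw [fdiff_coeff_top p m hp] at this
    have heq : p.coeff (m + 1) * ((m + 1).factorial : ℤ)
        = (m + 1 : ℤ) * p.coeff (m + 1) * (m.factorial : ℤ) := by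
      rw [Nat.factorial_succ]
      push_cast
      ring
    rw [heq]
    exact this

private lemma main_dvd (n : ℕ) : ∀ r : ℕ, ∀ p : Polynomial ℤ, p.natDegree ≤ r →
    (∀ x : ℤ, (n : ℤ) ∣ p.eval x) → ∀ k : ℕ, (n : ℤ) ∣ p.coeff k * (r.factorial : ℤ) := by
  intro r
  induction r with
  | zero =>
    intro p hp h k
    rcases Nat.eq_zero_or_pos k with rfl | hk
    · simpa [coeff_zero_eq_eval_zero] using h 0
    · rw [coeff_eq_zero_of_natDegree_lt (lt_of_le_of_lt hp hk)]
      simp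
  | succ r ih =>
    intro p hp h k
    set a : ℤ := p.coeff (r + 1) with ha
    have h1 : (n : ℤ) ∣ a * ((r + 1).factorial : ℤ) := lead_dvd n (r + 1) p hp h
    set D : Polynomial ℤ := descPochhammer ℤ (r + 1) with hD
    have hDdeg : D.natDegree = r + 1 := descPochhammer_natDegree (R := ℤ) (r + 1)
    have hDmonic : D.Monic := monic_descPochhammer ℤ (r + 1)
    -- divisibility of evaluations of D by (r+1)!
    have hDval : ∀ x : ℤ, ((r + 1).factorial : ℤ) ∣ D.eval x := by
      intro x
      rw [hD, eval_eq_smeval, Ring.descPochhammer_eq_factorial_smul_choose]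
      exact ⟨Ring.choose x (r + 1), by simp [nsmul_eq_mul]⟩
    set q : Polynomial ℤ := p - C a * D with hq
    have hqdeg : q.natDegree ≤ r := by
      rw [natDegree_le_iff_coeff_eq_zero]
      intro j hj
      rw [hq, coeff_sub, coeff_C_mul]
      rcases eq_or_lt_of_le (Nat.succ_le_of_lt hj) with hj' | hj'
      · have : D.coeff j = 1 := by
          rw [← hj']
          have := hDmonic.leadingCoeff
          rwa [leadingCoeff, hDdeg] at this
        rw [this, mul_one, ← hj', ← ha, sub_self]
      · have h1' : p.coeff j = 0 := coeff_eq_zero_of_natDegree_lt (lt_of_le_of_lt hp hj')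
        have h2' : D.coeff j = 0 := coeff_eq_zero_of_natDegree_lt (by omega)
        rw [h1', h2', mul_zero, sub_self]
    have hqnull : ∀ x : ℤ, (n : ℤ) ∣ q.eval x := by
      intro x
      rw [hq, eval_sub, eval_mul, eval_C]
      refine dvd_sub (h x) ?_
      obtain ⟨c, hc⟩ := hDval x
      rw [hc, ← mul_assoc]
      exact Dvd.dvd.mul_right h1 c
    have hk := ih q hqdeg hqnull k
    have hpk : p.coeff k = q.coeff k + a * D.coeff k := by
      rw [hq, coeff_sub, coeff_C_mul]
      ring
    rw [hpk, add_mul]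
    refine dvd_add ?_ ?_
    · have : (((r + 1).factorial : ℤ)) = (r.factorial : ℤ) * (r + 1 : ℤ) := by
        rw [Nat.factorial_succ]; push_cast; ring
      rw [this, ← mul_assoc]
      exact Dvd.dvd.mul_right hk _
    · have : a * D.coeff k * ((r + 1).factorial : ℤ)
          = (a * ((r + 1).factorial : ℤ)) * D.coeff k := by ring
      rw [this]
      exact Dvd.dvd.mul_right h1 _

/-- If `p ∈ ℤ[x]` is a null-polynomial modulo `n` of degree `r`, then every
coefficient `a_k` of `p` satisfies `a_k ⬝ r! ≡ 0 (mod n)`. -/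
theorem coeff_mul_factorial_dvd_of_null_polynomial
    (n : ℕ) (hn : 2 ≤ n) (p : Polynomial ℤ) (r : ℕ) (hr : p.natDegree = r)
    (h : ∀ x : ℤ, (n : ℤ) ∣ p.eval x) :
    ∀ k : ℕ, (n : ℤ) ∣ p.coeff k * (r.factorial : ℤ) := by
  exact main_dvd n r p (le_of_eq hr) h
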